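/- Let n ≥ 4 be an even integer and let α be a real number with 2/(n+1) ≤ α ≤ 1. Then the open disk {w ∈ ℂ : |w − 1| < 1 − α} is contained in Ω_{nL} = φ_{nL}(𝔻). (Consequently the Janowski class S*[1−α, 0] is contained in S*_{nL}.) -/

import Mathlib

open Complex Metric Set

/-- The function φ_{nL}(z) = 1 + n z/(n+1) + z^n/(n+1). -/
noncomputable def phinL (n : ℕ) (z : ℂ) : ℂ :=
  1 + (n : ℂ) * z / ((n : ℂ) + 1) + z ^ n / ((n : ℂ) + 1)

/-- Ω_{nL} = φ_{nL}(𝔻), the image of the open unit disk. -/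
def OmeganL (n : ℕ) : Set ℂ := phinL n '' ball (0 : ℂ) 1

/-- f is analytic on the unit disk with f(0) = 0 and f'(0) = 1. -/
def IsNormalizedAnalytic (f : ℂ → ℂ) : Prop :=
  AnalyticOnNhd ℂ f (ball (0 : ℂ) 1) ∧ f 0 = 0 ∧ deriv f 0 = 1

/-- p is subordinate to ψ on the unit disk. -/
def Subord (p ψ : ℂ → ℂ) : Prop :=
  ∃ ω : ℂ → ℂ, AnalyticOnNhd ℂ ω (ball (0 : ℂ) 1) ∧ ω 0 = 0 ∧
    (∀ z ∈ ball (0 : ℂ) 1, ω z ∈ ball (0 : ℂ) 1) ∧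
    (∀ z ∈ ball (0 : ℂ) 1, p z = ψ (ω z))

/-- Membership in the class S*_{nL}. -/
def MemSnL (n : ℕ) (f : ℂ → ℂ) : Prop :=
  IsNormalizedAnalytic f ∧ (∀ z ∈ ball (0 : ℂ) 1, z ≠ 0 → f z ≠ 0) ∧
  Subord (fun z => if z = 0 then 1 else z * deriv f z / f z) (phinL n)



lemma pow_diff_bound (r : ℝ) (hr : 0 ≤ r) :
    ∀ (k : ℕ) (a b : ℂ), ‖a‖ ≤ r → ‖b‖ ≤ r →
      ‖a ^ (k+1) - b ^ (k+1)‖ ≤ (k+1) * r ^ k * ‖a - b‖ := by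
  intro k
  induction k with
  | zero => intro a b _ _; simp
  | succ k ih =>
    intro a b ha hb
    have key : a ^ (k+2) - b ^ (k+2) = a ^ (k+1) * (a - b) + (a ^ (k+1) - b ^ (k+1)) * b := by
      ring
    have h1 : ‖a ^ (k+1) * (a - b)‖ ≤ r ^ (k+1) * ‖a - b‖ := by
      rw [norm_mul, norm_pow]
      gcongr
    have h2 : ‖(a ^ (k+1) - b ^ (k+1)) * b‖ ≤ ((k+1) * r ^ k * ‖a - b‖) * r := by
      rw [norm_mul]
      exact mul_le_mul (ih a b ha hb) hb (norm_nonneg _)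
        (by positivity)
    calc ‖a ^ (k+2) - b ^ (k+2)‖ ≤ ‖a ^ (k+1) * (a - b)‖ + ‖(a ^ (k+1) - b ^ (k+1)) * b‖ := by
          rw [key]; exact norm_add_le _ _
      _ ≤ r ^ (k+1) * ‖a - b‖ + ((k+1) * r ^ k * ‖a - b‖) * r := add_le_add h1 h2
      _ = ((k:ℝ)+1+1) * r ^ (k+1) * ‖a - b‖ := by ring
      _ = (↑(k+1) + 1) * r ^ (k+1) * ‖a - b‖ := by push_cast; ring


theorem stmt7 (n : ℕ) (hn : 4 ≤ n) (hne : Even n) (α : ℝ)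
    (hα1 : 2 / ((n : ℝ) + 1) ≤ α) (hα2 : α ≤ 1) :
    ball (1 : ℂ) (1 - α) ⊆ OmeganL n := by
  intro w hw
  have hn1 : (0:ℝ) < (n:ℝ) + 1 := by positivity
  have hn3 : (3:ℝ) ≤ (n:ℝ) - 1 := by
    have : (4:ℝ) ≤ (n:ℝ) := by exact_mod_cast hn
    linarith
  have hnm1 : (0:ℝ) < (n:ℝ) - 1 := by linarith
  set c : ℂ := ((n:ℂ) + 1) * (w - 1) with hc_def
  have hwd : ‖w - 1‖ < 1 - α := by
    simpa [dist_eq_norm] using hw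
  have hcn : ‖c‖ < (n:ℝ) - 1 := by
    have h1 : ‖c‖ = ((n:ℝ) + 1) * ‖w - 1‖ := by
      rw [hc_def, norm_mul]
      congr 1
      rw [show ((n:ℂ) + 1) = ((n+1 : ℕ) : ℂ) by push_cast; ring, Complex.norm_natCast]
      push_cast; ring
    have h2 : ((n:ℝ) + 1) * ‖w - 1‖ < ((n:ℝ) + 1) * (1 - α) := by
      exact mul_lt_mul_of_pos_left hwd hn1
    have h3 : ((n:ℝ) + 1) * (1 - α) ≤ (n:ℝ) - 1 := by
      have : 2 ≤ ((n:ℝ) + 1) * α := by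
        rw [div_le_iff₀ hn1] at hα1; linarith
      nlinarith
    linarith [h1, h2, h3]
  set r : ℝ := ‖c‖ / ((n:ℝ) - 1) with hr_def
  have hr0 : 0 ≤ r := by positivity
  have hr1 : r < 1 := by
    rw [hr_def, div_lt_one hnm1]; exact hcn
  have hcr : ‖c‖ = ((n:ℝ) - 1) * r := by
    rw [hr_def]; field_simp
  -- the contraction map
  set T : ℂ → ℂ := fun z => (c - z ^ n) / n with hT_def
  have hn0 : (n:ℂ) ≠ 0 := by
    exact_mod_cast Nat.cast_ne_zero.mpr (by omega)
  have hnr : (0:ℝ) < (n:ℝ) := by positivity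
  have hmapsTo : MapsTo T (closedBall 0 r) (closedBall 0 r) := by
    intro z hz
    simp only [mem_closedBall, dist_zero_right] at hz ⊢
    have hzn : ‖z ^ n‖ ≤ r ^ n := by
      rw [norm_pow]; gcongr
    have hrn : r ^ n ≤ r := by
      calc r ^ n ≤ r ^ 1 := pow_le_pow_of_le_one hr0 hr1.le (by omega)
        _ = r := pow_one r
    calc ‖T z‖ = ‖c - z ^ n‖ / (n:ℝ) := by
          rw [hT_def]; simp [norm_div]
      _ ≤ (‖c‖ + ‖z ^ n‖) / (n:ℝ) := by gcongr; exact norm_sub_le _ _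
      _ ≤ (((n:ℝ) - 1) * r + r) / (n:ℝ) := by
          rw [hcr]; gcongr; linarith
      _ = r := by field_simp; ring
  -- Lipschitz constant
  obtain ⟨m, hm⟩ : ∃ m, n = m + 1 := ⟨n - 1, by omega⟩
  have hm1 : 1 ≤ m := by omega
  set K : NNReal := ⟨r ^ m, by positivity⟩ with hK_def
  have hK1 : K < 1 := by
    rw [← NNReal.coe_lt_coe]
    exact pow_lt_one₀ hr0 hr1 (by omega)
  have hlip : LipschitzWith K (hmapsTo.restrict T _ _) := by
    apply LipschitzWith.of_dist_le_mul
    rintro ⟨a, ha⟩ ⟨b, hb⟩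
    simp only [MapsTo.restrict, Subtype.dist_eq, Subtype.coe_mk]
    simp only [mem_closedBall, dist_zero_right] at ha hb
    have hbd := pow_diff_bound r hr0 m b a hb ha
    calc dist (T a) (T b) = ‖b ^ n - a ^ n‖ / (n:ℝ) := by
          rw [dist_eq_norm, hT_def]
          rw [div_sub_div_same, norm_div]
          congr 1
          · ring_nf
          · simp
      _ ≤ ((m+1) * r ^ m * ‖b - a‖) / (n:ℝ) := by
          rw [hm]; gcongr
      _ = r ^ m * ‖b - a‖ := by
          rw [hm]; push_cast; field_simp
      _ = K * dist a b := by
          simp [hK_def, dist_eq_norm, norm_sub_rev a b]; exact Or.inl rfl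
  have hcontr : ContractingWith K (hmapsTo.restrict T _ _) := ⟨hK1, hlip⟩
  have hcomplete : IsComplete (closedBall (0:ℂ) r) :=
    (isClosed_closedBall).isComplete
  have h0mem : (0:ℂ) ∈ closedBall (0:ℂ) r := by
    simp [hr0]
  obtain ⟨y, hy_mem, hy_fix, -, -⟩ :=
    hcontr.exists_fixedPoint' hcomplete hmapsTo h0mem (edist_ne_top _ _)
  refine ⟨y, ?_, ?_⟩
  · simp only [mem_ball, dist_zero_right]
    simp only [mem_closedBall, dist_zero_right] at hy_mem
    linarith
  · have heq : (c - y ^ n) / n = y := hy_fix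
    have heq2 : (n:ℂ) * y + y ^ n = c := by
      field_simp at heq
      linear_combination -heq
    have hn1c : ((n:ℂ) + 1) ≠ 0 := by
      intro h
      have : ((n:ℝ) + 1) = 0 := by exact_mod_cast congrArg Complex.re h
      linarith
    rw [hc_def] at heq2
    rw [phinL]
    field_simp
    linear_combination heq2
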